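/- Every connected non-regular subcubic graph with minimum degree at most 1 whose every proper induced subgraph obtained by deleting a minimum-degree vertex is (1,1,2,2)-packing colorable is itself (1,1,2,2)-packing colorable. -/

import Mathlib

open SimpleGraph

variable {V : Type*}

/-- The square of a graph: vertices adjacent iff their distance in `G` is 1 or 2. -/
def square (G : SimpleGraph V) : SimpleGraph V where
  Adj x y := x ≠ y ∧ (G.Adj x y ∨ ∃ z, G.Adj x z ∧ G.Adj z y)
  symm := ⟨by
    rintro x y ⟨hxy, h | ⟨z, h1, h2⟩⟩
    · exact ⟨hxy.symm, Or.inl h.symm⟩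
    · exact ⟨hxy.symm, Or.inr ⟨z, h2.symm, h1.symm⟩⟩⟩
  loopless := ⟨fun x h => h.1 rfl⟩

/-- Any two distinct vertices of `A` are at distance at least 3 in `G`
(equivalently, non-adjacent in the square of `G`). -/
def PairwiseDist3 (G : SimpleGraph V) (A : Set V) : Prop :=
  ∀ x ∈ A, ∀ y ∈ A, x ≠ y → ¬ (square G).Adj x y

/-- `A` is an independent set of `G`. -/
def IndepSet (G : SimpleGraph V) (A : Set V) : Prop :=
  ∀ x ∈ A, ∀ y ∈ A, ¬ G.Adj x y

/-- `V1, V2, V3, V4` form a `(1,1,2,2)`-packing coloring of `G`. -/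
def IsPacking1122 (G : SimpleGraph V) (V1 V2 V3 V4 : Set V) : Prop :=
  (∀ v, v ∈ V1 ∨ v ∈ V2 ∨ v ∈ V3 ∨ v ∈ V4) ∧
  Disjoint V1 V2 ∧ Disjoint V1 V3 ∧ Disjoint V1 V4 ∧
  Disjoint V2 V3 ∧ Disjoint V2 V4 ∧ Disjoint V3 V4 ∧
  IndepSet G V1 ∧ IndepSet G V2 ∧ PairwiseDist3 G V3 ∧ PairwiseDist3 G V4

/-- `G` is `(1,1,2,2)`-packing colorable. -/
def Packing1122 (G : SimpleGraph V) : Prop :=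
  ∃ V1 V2 V3 V4 : Set V, IsPacking1122 G V1 V2 V3 V4

theorem stmt12 [Fintype V] (G : SimpleGraph V) [DecidableRel G.Adj]
    (hconn : G.Connected) (hsub : ∀ v, G.degree v ≤ 3) (hnonreg : ∃ v, G.degree v < 3)
    (hδ : ∃ v, G.degree v ≤ 1)
    (hdel : ∀ u : V, (∀ v, G.degree u ≤ G.degree v) →
      Packing1122 (G.induce ({u}ᶜ : Set V))) :
    Packing1122 G := by
  classical
  obtain ⟨v0, hv0⟩ := hδ
  obtain ⟨u, -, hu⟩ := Finset.exists_min_image (Finset.univ : Finset V) (fun v => G.degree v)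
    ⟨v0, Finset.mem_univ v0⟩
  have humin : ∀ v, G.degree u ≤ G.degree v := fun v => hu v (Finset.mem_univ v)
  have hud : G.degree u ≤ 1 := le_trans (humin v0) hv0
  have huniq : ∀ x y, G.Adj u x → G.Adj u y → x = y := by
    intro x y hx hy
    by_contra hne
    have h2 : 2 ≤ G.degree u := by
      rw [← SimpleGraph.card_neighborFinset_eq_degree]
      have hsubset : ({x, y} : Finset V) ⊆ G.neighborFinset u := by
        intro z hz
        simp only [Finset.mem_insert, Finset.mem_singleton] at hz
        rcases hz with rfl | rfl <;> simp [SimpleGraph.mem_neighborFinset, hx, hy]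
      calc 2 = ({x, y} : Finset V).card := (Finset.card_pair hne).symm
        _ ≤ _ := Finset.card_le_card hsubset
    omega
  set S : Set V := ({u}ᶜ : Set V) with hS
  obtain ⟨V1', V2', V3', V4', hcov, h12, h13, h14, h23, h24, h34, hi1, hi2, hd3, hd4⟩ :=
    hdel u humin
  let L : Set S → Set V := fun A => {x | ∃ hx : x ∈ S, (⟨x, hx⟩ : S) ∈ A}
  have hmemL : ∀ (A : Set S) (x : V), x ∈ L A ↔ ∃ hx : x ∈ S, (⟨x, hx⟩ : S) ∈ A := by
    intro A x; rfl
  have hLne : ∀ (A : Set S) (x : V), x ∈ L A → x ≠ u := by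
    rintro A x ⟨hx, -⟩
    simpa [hS] using hx
  have hadj : ∀ (a b : S), (G.induce S).Adj a b ↔ G.Adj (a : V) (b : V) := by
    intro a b; simp [SimpleGraph.comap_adj]
  have hLindep : ∀ A : Set S, IndepSet (G.induce S) A → IndepSet G (L A) := by
    rintro A hA x ⟨hx, hxA⟩ y ⟨hy, hyA⟩ hxy
    exact hA _ hxA _ hyA ((hadj ⟨x, hx⟩ ⟨y, hy⟩).2 hxy)
  have hLdist : ∀ A : Set S, PairwiseDist3 (G.induce S) A → PairwiseDist3 G (L A) := by
    rintro A hA x ⟨hx, hxA⟩ y ⟨hy, hyA⟩ hne ⟨-, hsq⟩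
    have hne' : (⟨x, hx⟩ : S) ≠ ⟨y, hy⟩ := by
      intro h; exact hne (congrArg Subtype.val h)
    refine hA _ hxA _ hyA hne' ⟨hne', ?_⟩
    rcases hsq with h | ⟨z, hz1, hz2⟩
    · exact Or.inl ((hadj _ _).2 h)
    · have hzu : z ≠ u := by
        intro h; subst h
        exact hne (huniq x y hz1.symm hz2)
      have hzS : z ∈ S := by simpa [hS] using hzu
      exact Or.inr ⟨⟨z, hzS⟩, (hadj _ _).2 hz1, (hadj _ _).2 hz2⟩
  have hLdisj : ∀ A B : Set S, Disjoint A B → Disjoint (L A) (L B) := by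
    intro A B hAB
    rw [Set.disjoint_left]
    rintro x ⟨hx, hxA⟩ ⟨hy, hyB⟩
    exact Set.disjoint_left.1 hAB hxA hyB
  have huL : ∀ A : Set S, u ∉ L A := fun A h => hLne A u h rfl
  have hcov' : ∀ v : V, v ≠ u → v ∈ L V1' ∨ v ∈ L V2' ∨ v ∈ L V3' ∨ v ∈ L V4' := by
    intro v hv
    have hvS : v ∈ S := by simpa [hS] using hv
    rcases hcov ⟨v, hvS⟩ with h | h | h | h
    · exact Or.inl ⟨hvS, h⟩
    · exact Or.inr (Or.inl ⟨hvS, h⟩)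
    · exact Or.inr (Or.inr (Or.inl ⟨hvS, h⟩))
    · exact Or.inr (Or.inr (Or.inr ⟨hvS, h⟩))
  have hdisj_u : ∀ A B : Set S, Disjoint A B → Disjoint (L A ∪ {u}) (L B) := by
    intro A B hAB
    rw [Set.disjoint_left]
    rintro x (hx | hx) hxB
    · exact Set.disjoint_left.1 (hLdisj A B hAB) hx hxB
    · rw [Set.mem_singleton_iff] at hx; subst hx; exact huL B hxB
  by_cases hc : ∃ w, G.Adj u w ∧ w ∈ L V1'
  · refine ⟨L V1', L V2' ∪ {u}, L V3', L V4', ?_, ?_, hLdisj _ _ h13, hLdisj _ _ h14,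
      ?_, ?_, hLdisj _ _ h34, hLindep _ hi1, ?_, hLdist _ hd3, hLdist _ hd4⟩
    · intro v
      by_cases hvu : v = u
      · exact Or.inr (Or.inl (Or.inr (by simp [hvu])))
      · rcases hcov' v hvu with h | h | h | h
        · exact Or.inl h
        · exact Or.inr (Or.inl (Or.inl h))
        · exact Or.inr (Or.inr (Or.inl h))
        · exact Or.inr (Or.inr (Or.inr h))
    · exact ((hdisj_u V2' V1' h12.symm).symm)
    · exact (hdisj_u V2' V3' h23)
    · exact (hdisj_u V2' V4' h24)
    · rintro x hx y hy hxy
      obtain ⟨w, hw, hwV1⟩ := hc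
      rcases hx with hx | hx
      · rcases hy with hy | hy
        · exact hLindep _ hi2 x hx y hy hxy
        · rw [Set.mem_singleton_iff] at hy; subst hy
          have : x = w := huniq x w hxy.symm hw
          subst this
          exact Set.disjoint_left.1 (hLdisj _ _ h12) (hwV1) hx
      · rw [Set.mem_singleton_iff] at hx; subst hx
        rcases hy with hy | hy
        · have : y = w := huniq y w hxy hw
          subst this
          exact Set.disjoint_left.1 (hLdisj _ _ h12) hwV1 hy
        · rw [Set.mem_singleton_iff] at hy; subst hy
          exact G.loopless.irrefl _ hxy
  · refine ⟨L V1' ∪ {u}, L V2', L V3', L V4', ?_, hdisj_u _ _ h12, hdisj_u _ _ h13,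
      hdisj_u _ _ h14, hLdisj _ _ h23, hLdisj _ _ h24, hLdisj _ _ h34, ?_,
      hLindep _ hi2, hLdist _ hd3, hLdist _ hd4⟩
    · intro v
      by_cases hvu : v = u
      · exact Or.inl (Or.inr (by simp [hvu]))
      · rcases hcov' v hvu with h | h | h | h
        · exact Or.inl (Or.inl h)
        · exact Or.inr (Or.inl h)
        · exact Or.inr (Or.inr (Or.inl h))
        · exact Or.inr (Or.inr (Or.inr h))
    · rintro x hx y hy hxy
      rcases hx with hx | hx
      · rcases hy with hy | hy
        · exact hLindep _ hi1 x hx y hy hxy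
        · rw [Set.mem_singleton_iff] at hy; subst hy
          exact hc ⟨x, hxy.symm, hx⟩
      · rw [Set.mem_singleton_iff] at hx; subst hx
        rcases hy with hy | hy
        · exact hc ⟨y, hxy, hy⟩
        · rw [Set.mem_singleton_iff] at hy; subst hy
          exact G.loopless.irrefl _ hxy
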